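/- Let P ⊂ ℝ² be a convex polygon. There exists a constant C such that for all non-negative continuous convex functions f on P, the L² norm of f over P is bounded by C times the integral of f over the boundary ∂P with respect to arc-length-type boundary measure: ‖f‖_{L²(P)} ≤ C ∫_{∂P} f dσ. -/

import Mathlib

open MeasureTheory Set
open scoped ENNReal NNReal

theorem my_frontier_subset_segments (V : Finset (ℝ × ℝ)) :
    frontier (convexHull ℝ (V : Set (ℝ × ℝ))) ⊆ ⋃ u ∈ V, ⋃ v ∈ V, segment ℝ u v := by
  classical
  intro x hx
  have hcl : IsClosed (convexHull ℝ (V : Set (ℝ × ℝ))) :=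
    (V.finite_toSet.isCompact_convexHull ℝ).isClosed
  have hxP : x ∈ convexHull ℝ (V : Set (ℝ × ℝ)) := by
    rw [← hcl.closure_eq]; exact hx.1
  have hxni : x ∉ interior (convexHull ℝ (V : Set (ℝ × ℝ))) := hx.2
  obtain ⟨ι, hfin, z, w, hzV, hind, hwpos, hwsum, hxc⟩ :=
    eq_pos_convex_span_of_mem_convexHull hxP
  have hzV' : ∀ i, z i ∈ V := fun i => hzV ⟨i, rfl⟩
  have hcard : Fintype.card ι ≤ 3 := by
    have h1 := hind.card_le_finrank_succ
    have h2 : Module.finrank ℝ ↥(vectorSpan ℝ (range z)) ≤ 2 := by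
      have := Submodule.finrank_le (vectorSpan ℝ (range z))
      simpa using this
    omega
  have memseg : ∀ u v : ℝ × ℝ, u ∈ V → v ∈ V → x ∈ segment ℝ u v →
      x ∈ ⋃ u ∈ V, ⋃ v ∈ V, segment ℝ u v := by
    intro u v hu hv hseg
    simp only [Set.mem_iUnion]
    exact ⟨u, hu, v, hv, hseg⟩
  interval_cases h : Fintype.card ι
  · rw [Fintype.card_eq_zero_iff] at h
    have : (∑ i, w i) = 0 := by haveI := h; simp
    rw [hwsum] at this; exact absurd this one_ne_zero
  · obtain ⟨i, hi⟩ := Fintype.card_eq_one_iff.mp h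
    have huniv : (Finset.univ : Finset ι) = {i} := Finset.ext fun j => by simp [hi j]
    rw [huniv, Finset.sum_singleton] at hwsum hxc
    rw [hwsum, one_smul] at hxc
    exact memseg _ _ (hzV' i) (hzV' i) (hxc ▸ left_mem_segment ℝ _ _)
  · have h' : (Finset.univ : Finset ι).card = 2 := h
    obtain ⟨i, j, hij, huniv⟩ := Finset.card_eq_two.mp h'
    rw [huniv, Finset.sum_pair hij] at hwsum hxc
    exact memseg _ _ (hzV' i) (hzV' j)
      ⟨w i, w j, (hwpos i).le, (hwpos j).le, hwsum, hxc⟩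
  · exfalso
    apply hxni
    have htop : affineSpan ℝ (Set.range z) = ⊤ := by
      rw [hind.affineSpan_eq_top_iff_card_eq_finrank_add_one]
      simp [h]
    let b : AffineBasis ι ℝ (ℝ × ℝ) := ⟨z, hind, htop⟩
    have hxcomb : x = (Finset.affineCombination ℝ Finset.univ (b : ι → ℝ × ℝ)) w := by
      rw [Finset.affineCombination_eq_linear_combination _ _ _ hwsum]
      exact hxc.symm
    have hcoord : ∀ i, 0 < b.coord i x := by
      intro i
      rw [hxcomb, b.coord_apply_combination_of_mem (Finset.mem_univ i) hwsum]
      exact hwpos i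
    have hmem : x ∈ interior (convexHull ℝ (Set.range z)) := by
      have hic := b.interior_convexHull
      have hb : Set.range (b : ι → ℝ × ℝ) = Set.range z := rfl
      rw [hb] at hic
      rw [hic]
      exact hcoord
    exact interior_mono (convexHull_mono (Set.range_subset_iff.mpr hzV')) hmem

lemma my_vert_endpoint {P : Set (ℝ × ℝ)} (hPcpt : IsCompact P) {f : ℝ × ℝ → ℝ}
    (hconv : ConvexOn ℝ P f) {x : ℝ × ℝ} (hx : x ∈ P) {t : ℝ} (ht : t < f x) :
    ∃ y, (x.1, y) ∈ frontier P ∧ t < f (x.1, y) := by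
  set Y : Set ℝ := {y | (x.1, y) ∈ P} with hY
  have hYclosed : IsClosed Y := hPcpt.isClosed.preimage (by fun_prop)
  have hYbdd : Bornology.IsBounded Y := by
    obtain ⟨R, hR⟩ := hPcpt.isBounded.subset_ball 0
    have : Y ⊆ Metric.ball 0 R := by
      intro y hy
      have := hR hy
      simp only [Metric.mem_ball, Prod.dist_eq, dist_zero_right] at this ⊢
      exact lt_of_le_of_lt (le_max_right _ _) this
    exact (Metric.isBounded_ball).subset this
  have hYcpt : IsCompact Y := Metric.isCompact_of_isClosed_isBounded hYclosed hYbdd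
  have hYne : Y.Nonempty := ⟨x.2, by simpa [hY] using hx⟩
  set a := sInf Y
  set b := sSup Y
  have ha : a ∈ Y := hYcpt.sInf_mem hYne
  have hb : b ∈ Y := hYcpt.sSup_mem hYne
  have hfra : (x.1, a) ∈ frontier P := by
    refine ⟨subset_closure ha, fun hint => ?_⟩
    obtain ⟨ε, hε, hball⟩ := Metric.isOpen_iff.mp isOpen_interior _ hint
    have : (x.1, a - ε/2) ∈ P := by
      apply interior_subset; apply hball
      rw [Metric.mem_ball, Prod.dist_eq]
      apply max_lt
      · simpa using hε
      · rw [Real.dist_eq, show a - ε/2 - a = -(ε/2) by ring, abs_neg,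
          abs_of_pos (by linarith)]
        linarith
    have : a - ε/2 ∈ Y := this
    have := csInf_le hYbdd.bddBelow this
    linarith
  have hfrb : (x.1, b) ∈ frontier P := by
    refine ⟨subset_closure hb, fun hint => ?_⟩
    obtain ⟨ε, hε, hball⟩ := Metric.isOpen_iff.mp isOpen_interior _ hint
    have : (x.1, b + ε/2) ∈ P := by
      apply interior_subset; apply hball
      rw [Metric.mem_ball, Prod.dist_eq]
      apply max_lt
      · simpa using hε
      · rw [Real.dist_eq, show b + ε/2 - b = ε/2 by ring, abs_of_pos (by linarith)]
        linarith
    have : b + ε/2 ∈ Y := this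
    have := le_csSup hYbdd.bddAbove this
    linarith
  have hxseg : x ∈ segment ℝ ((x.1, a) : ℝ × ℝ) (x.1, b) := by
    have hx2 : x.2 ∈ Icc a b :=
      ⟨csInf_le hYbdd.bddBelow (by simpa [hY] using hx),
       le_csSup hYbdd.bddAbove (by simpa [hY] using hx)⟩
    have hab : a ≤ b := hx2.1.trans hx2.2
    rw [← segment_eq_Icc hab] at hx2
    obtain ⟨θ₁, θ₂, h1, h2, h12, hc⟩ := hx2
    exact ⟨θ₁, θ₂, h1, h2, h12, by
      simp only [Prod.smul_mk, smul_eq_mul, Prod.mk_add_mk]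
      ext
      · simp only []
        rw [show θ₁ * x.1 + θ₂ * x.1 = (θ₁ + θ₂) * x.1 by ring, h12, one_mul]
      · simpa using hc⟩
  have hmax := hconv.le_on_segment ha hb hxseg
  rcases le_max_iff.mp hmax with h | h
  · exact ⟨a, hfra, lt_of_lt_of_le ht h⟩
  · exact ⟨b, hfrb, lt_of_lt_of_le ht h⟩

lemma my_horiz_endpoint {P : Set (ℝ × ℝ)} (hPcpt : IsCompact P) {f : ℝ × ℝ → ℝ}
    (hconv : ConvexOn ℝ P f) {x : ℝ × ℝ} (hx : x ∈ P) {t : ℝ} (ht : t < f x) :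
    ∃ s, (s, x.2) ∈ frontier P ∧ t < f (s, x.2) := by
  set Y : Set ℝ := {s | (s, x.2) ∈ P} with hY
  have hYclosed : IsClosed Y := hPcpt.isClosed.preimage (by fun_prop)
  have hYbdd : Bornology.IsBounded Y := by
    obtain ⟨R, hR⟩ := hPcpt.isBounded.subset_ball 0
    have : Y ⊆ Metric.ball 0 R := by
      intro y hy
      have := hR hy
      simp only [Metric.mem_ball, Prod.dist_eq, dist_zero_right] at this ⊢
      exact lt_of_le_of_lt (le_max_left _ _) this
    exact (Metric.isBounded_ball).subset this
  have hYcpt : IsCompact Y := Metric.isCompact_of_isClosed_isBounded hYclosed hYbdd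
  have hYne : Y.Nonempty := ⟨x.1, by simpa [hY] using hx⟩
  set a := sInf Y
  set b := sSup Y
  have ha : a ∈ Y := hYcpt.sInf_mem hYne
  have hb : b ∈ Y := hYcpt.sSup_mem hYne
  have hfra : (a, x.2) ∈ frontier P := by
    refine ⟨subset_closure ha, fun hint => ?_⟩
    obtain ⟨ε, hε, hball⟩ := Metric.isOpen_iff.mp isOpen_interior _ hint
    have : (a - ε/2, x.2) ∈ P := by
      apply interior_subset; apply hball
      rw [Metric.mem_ball, Prod.dist_eq]
      apply max_lt
      · rw [Real.dist_eq, show a - ε/2 - a = -(ε/2) by ring, abs_neg,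
          abs_of_pos (by linarith)]
        linarith
      · simpa using hε
    have : a - ε/2 ∈ Y := this
    have := csInf_le hYbdd.bddBelow this
    linarith
  have hfrb : (b, x.2) ∈ frontier P := by
    refine ⟨subset_closure hb, fun hint => ?_⟩
    obtain ⟨ε, hε, hball⟩ := Metric.isOpen_iff.mp isOpen_interior _ hint
    have : (b + ε/2, x.2) ∈ P := by
      apply interior_subset; apply hball
      rw [Metric.mem_ball, Prod.dist_eq]
      apply max_lt
      · rw [Real.dist_eq, show b + ε/2 - b = ε/2 by ring, abs_of_pos (by linarith)]
        linarith
      · simpa using hε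
    have : b + ε/2 ∈ Y := this
    have := le_csSup hYbdd.bddAbove this
    linarith
  have hxseg : x ∈ segment ℝ ((a, x.2) : ℝ × ℝ) (b, x.2) := by
    have hx2 : x.1 ∈ Icc a b :=
      ⟨csInf_le hYbdd.bddBelow (by simpa [hY] using hx),
       le_csSup hYbdd.bddAbove (by simpa [hY] using hx)⟩
    have hab : a ≤ b := hx2.1.trans hx2.2
    rw [← segment_eq_Icc hab] at hx2
    obtain ⟨θ₁, θ₂, h1, h2, h12, hc⟩ := hx2
    exact ⟨θ₁, θ₂, h1, h2, h12, by
      simp only [Prod.smul_mk, smul_eq_mul, Prod.mk_add_mk]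
      ext
      · simpa using hc
      · simp only []
        rw [show θ₁ * x.2 + θ₂ * x.2 = (θ₁ + θ₂) * x.2 by ring, h12, one_mul]⟩
  have hmax := hconv.le_on_segment ha hb hxseg
  rcases le_max_iff.mp hmax with h | h
  · exact ⟨a, hfra, lt_of_lt_of_le ht h⟩
  · exact ⟨b, hfrb, lt_of_lt_of_le ht h⟩

lemma my_prod_vol_le (T : Set (ℝ × ℝ)) :
    volume ((Prod.fst '' T) ×ˢ (Prod.snd '' T)) ≤ μH[1] T * μH[1] T := by
  rw [Measure.volume_eq_prod, Measure.prod_prod]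
  have h1 : (volume : Measure ℝ) (Prod.fst '' T) ≤ μH[1] T := by
    rw [← hausdorffMeasure_real]
    simpa using LipschitzWith.prod_fst.hausdorffMeasure_image_le zero_le_one T
  have h2 : (volume : Measure ℝ) (Prod.snd '' T) ≤ μH[1] T := by
    rw [← hausdorffMeasure_real]
    simpa using LipschitzWith.prod_snd.hausdorffMeasure_image_le zero_le_one T
  exact mul_le_mul' h1 h2

/-- For a compact convex polygon `P ⊂ ℝ²` with nonempty interior
there is a constant `C` such that for every non-negative continuous convex
function `f` on `P`, `‖f‖_{L²(P)} ≤ C ∫_{∂P} f dσ`, where the boundary measure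
is the 1-dimensional Hausdorff (arc length) measure on `∂P`. -/
theorem stmt_2 (V : Finset (ℝ × ℝ)) (P : Set (ℝ × ℝ))
    (hP : P = convexHull ℝ (V : Set (ℝ × ℝ))) (hint : (interior P).Nonempty) :
    ∃ C : ℝ, 0 < C ∧ ∀ f : ℝ × ℝ → ℝ,
      ContinuousOn f P → ConvexOn ℝ P f → (∀ p ∈ P, 0 ≤ f p) →
      Real.sqrt (∫ p in P, (f p) ^ 2) ≤ C * ∫ p in frontier P, f p ∂(μH[1]) := by
  classical
  have hPcpt : IsCompact P := hP ▸ V.finite_toSet.isCompact_convexHull ℝ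
  have hPclosed : IsClosed P := hPcpt.isClosed
  have hPmeas : MeasurableSet P := hPclosed.measurableSet
  have hFmeas : MeasurableSet (frontier P) := isClosed_frontier.measurableSet
  have hFsub : frontier P ⊆ P := hPclosed.frontier_subset
  have hFfin : μH[1] (frontier P) < ⊤ := by
    have hsub : frontier P ⊆ ⋃ u ∈ V, ⋃ v ∈ V, segment ℝ u v := by
      rw [hP]; exact my_frontier_subset_segments V
    calc μH[1] (frontier P) ≤ μH[1] (⋃ u ∈ V, ⋃ v ∈ V, segment ℝ u v) :=
          measure_mono hsub
      _ ≤ ∑ u ∈ V, μH[1] (⋃ v ∈ V, segment ℝ u v) := measure_biUnion_finset_le _ _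
      _ ≤ ∑ u ∈ V, ∑ v ∈ V, μH[1] (segment ℝ u v) :=
          Finset.sum_le_sum fun u _ => measure_biUnion_finset_le _ _
      _ < ⊤ := by
          apply ENNReal.sum_lt_top.mpr
          intro u _
          apply ENNReal.sum_lt_top.mpr
          intro v _
          rw [hausdorffMeasure_segment]
          exact edist_lt_top u v
  refine ⟨Real.sqrt 2, Real.sqrt_pos.mpr two_pos, ?_⟩
  intro f hf hconv hnn
  set B := ∫⁻ x in frontier P, ENNReal.ofReal (f x) ∂μH[1] with hB
  have hfP_aemeas : AEMeasurable f (volume.restrict P) := hf.aemeasurable hPmeas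
  have hfF_aemeas : AEMeasurable f (μH[1].restrict (frontier P)) :=
    (hf.mono hFsub).aemeasurable hFmeas
  have hf_nnP : 0 ≤ᵐ[volume.restrict P] f :=
    (ae_restrict_iff' hPmeas).mpr (ae_of_all _ hnn)
  have hf_nnF : 0 ≤ᵐ[μH[1].restrict (frontier P)] f :=
    (ae_restrict_iff' hFmeas).mpr (ae_of_all _ fun x hx => hnn x (hFsub hx))
  set σ : ℝ → ℝ≥0∞ := fun t => μH[1] ({p | t < f p} ∩ frontier P) with hσ
  have hσ_anti : Antitone σ := fun s t hst =>
    measure_mono (inter_subset_inter_left _ (fun p hp => lt_of_le_of_lt hst hp))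
  have hσ_meas : Measurable σ := hσ_anti.measurable
  have hBlc : B = ∫⁻ t in Ioi (0:ℝ), σ t := by
    rw [hB, lintegral_eq_lintegral_meas_lt _ hf_nnF hfF_aemeas]
    apply lintegral_congr
    intro t
    rw [Measure.restrict_apply' hFmeas]
  have hσB : ∀ t : ℝ, ENNReal.ofReal t * σ t ≤ B := by
    intro t
    rcases le_or_gt t 0 with h | h
    · rw [ENNReal.ofReal_eq_zero.mpr h, zero_mul]; exact zero_le
    · have h1 : ENNReal.ofReal t * σ t = ∫⁻ _ in Ioc (0:ℝ) t, σ t := by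
        rw [setLIntegral_const, Real.volume_Ioc, sub_zero, mul_comm]
      rw [h1]
      refine le_trans (setLIntegral_mono hσ_meas fun s hs => hσ_anti hs.2) ?_
      rw [hBlc]
      exact lintegral_mono_set Ioc_subset_Ioi_self
  have harea : ∀ t : ℝ, volume ({p | t < f p} ∩ P) ≤ σ t * σ t := by
    intro t
    set T := {p | t < f p} ∩ frontier P with hT
    have hsubset : {p | t < f p} ∩ P ⊆ (Prod.fst '' T) ×ˢ (Prod.snd '' T) := by
      rintro x ⟨hxt, hxP⟩
      obtain ⟨y, hyF, hyt⟩ := my_vert_endpoint hPcpt hconv hxP hxt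
      obtain ⟨s, hsF, hst⟩ := my_horiz_endpoint hPcpt hconv hxP hxt
      exact ⟨⟨(x.1, y), ⟨hyt, hyF⟩, rfl⟩, ⟨(s, x.2), ⟨hst, hsF⟩, rfl⟩⟩
    exact le_trans (measure_mono hsubset) (my_prod_vol_le T)
  have hmain : (∫⁻ x in P, ENNReal.ofReal (f x ^ 2) ∂volume) ≤ 2 * B * B := by
    have hg_intble : ∀ t > (0:ℝ), IntervalIntegrable (fun s => 2 * s) volume 0 t :=
      fun t _ => (continuous_const.mul continuous_id).intervalIntegrable 0 t
    have hg_nn : ∀ᵐ t ∂(volume.restrict (Ioi (0:ℝ))), 0 ≤ 2 * t :=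
      (ae_restrict_iff' measurableSet_Ioi).mpr
        (ae_of_all _ fun t ht => by have : (0:ℝ) < t := ht; linarith)
    have hkey := lintegral_comp_eq_lintegral_meas_lt_mul (volume.restrict P)
      hf_nnP hfP_aemeas hg_intble hg_nn
    have hsq : ∀ ω : ℝ × ℝ, (∫ s in (0:ℝ)..f ω, 2 * s) = f ω ^ 2 := by
      intro ω
      rw [intervalIntegral.integral_const_mul, integral_id]
      ring
    simp only [hsq] at hkey
    rw [hkey]
    have hbound : ∀ t ∈ Ioi (0:ℝ),
        (volume.restrict P) {a | t < f a} * ENNReal.ofReal (2 * t) ≤ 2 * B * σ t := by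
      intro t _
      rw [Measure.restrict_apply' hPmeas]
      calc volume ({a | t < f a} ∩ P) * ENNReal.ofReal (2 * t)
          ≤ (σ t * σ t) * ENNReal.ofReal (2 * t) :=
            mul_le_mul_left (harea t) _
        _ = 2 * ((ENNReal.ofReal t * σ t) * σ t) := by
            rw [ENNReal.ofReal_mul (by norm_num : (0:ℝ) ≤ 2)]
            rw [show ENNReal.ofReal (2:ℝ) = 2 by norm_num]
            ring
        _ ≤ 2 * (B * σ t) := by
            exact mul_le_mul_right (mul_le_mul_left (hσB t) _) _
        _ = 2 * B * σ t := by ring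
    calc (∫⁻ t in Ioi (0:ℝ), (volume.restrict P) {a | t < f a} * ENNReal.ofReal (2 * t))
        ≤ ∫⁻ t in Ioi (0:ℝ), 2 * B * σ t := setLIntegral_mono (by fun_prop) hbound
      _ = 2 * B * ∫⁻ t in Ioi (0:ℝ), σ t := lintegral_const_mul _ hσ_meas
      _ = 2 * B * B := by rw [← hBlc]
  obtain ⟨M, hM⟩ := (hPcpt.of_isClosed_subset isClosed_frontier hFsub).exists_bound_of_continuousOn
    (hf.mono hFsub)
  have hBfin : B ≠ ⊤ := by
    have hle : B ≤ ENNReal.ofReal M * μH[1] (frontier P) := by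
      rw [hB]
      calc ∫⁻ x in frontier P, ENNReal.ofReal (f x) ∂μH[1]
          ≤ ∫⁻ _ in frontier P, ENNReal.ofReal M ∂μH[1] := by
            apply setLIntegral_mono measurable_const
            intro x hx
            exact ENNReal.ofReal_le_ofReal ((le_abs_self _).trans (hM x hx))
        _ = ENNReal.ofReal M * μH[1] (frontier P) := by
            rw [setLIntegral_const]
    exact (lt_of_le_of_lt hle (ENNReal.mul_lt_top ENNReal.ofReal_lt_top hFfin)).ne
  have hRHS : ∫ p in frontier P, f p ∂μH[1] = B.toReal := by
    rw [integral_eq_lintegral_of_nonneg_ae hf_nnF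
      ((hf.mono hFsub).aestronglyMeasurable hFmeas)]
  have hf2_nnP : 0 ≤ᵐ[volume.restrict P] fun p => f p ^ 2 :=
    ae_of_all _ fun p => sq_nonneg _
  have hLHS : (∫ p in P, f p ^ 2) = (∫⁻ x in P, ENNReal.ofReal (f x ^ 2) ∂volume).toReal := by
    rw [integral_eq_lintegral_of_nonneg_ae hf2_nnP
      ((hf.pow 2).aestronglyMeasurable hPmeas)]
  rw [hLHS, hRHS]
  have h2BB : (2 * B * B) ≠ ⊤ := by
    apply ENNReal.mul_ne_top (ENNReal.mul_ne_top (by norm_num) hBfin) hBfin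
  have h1 : (∫⁻ x in P, ENNReal.ofReal (f x ^ 2) ∂volume).toReal ≤ (2 * B * B).toReal :=
    ENNReal.toReal_mono h2BB hmain
  calc Real.sqrt (∫⁻ x in P, ENNReal.ofReal (f x ^ 2) ∂volume).toReal
      ≤ Real.sqrt (2 * B * B).toReal := Real.sqrt_le_sqrt h1
    _ = Real.sqrt 2 * B.toReal := by
        rw [ENNReal.toReal_mul, ENNReal.toReal_mul]
        rw [show ((2:ℝ≥0∞)).toReal = 2 by norm_num]
        rw [mul_assoc, Real.sqrt_mul (by norm_num : (0:ℝ) ≤ 2),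
          Real.sqrt_mul_self ENNReal.toReal_nonneg]
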